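/- Let k > 0 and define x(λ) = λ + k − 3 + (k−3)/(2λ) for λ > 0. Then the residual R(λ) = λ·x'(λ)·(x(λ) − k − λ + 4) + x(λ)·(x(λ) − k − λ + 2) obtained by substituting x into the mode ODE satisfies λ·R(λ) bounded as λ → ∞; in particular R(λ) → 0 as λ → ∞, so x(λ) = λ + k − 3 + (k−3)/(2λ) is an approximate solution of the mode equation with error of order O(1/λ). -/

import Mathlib

/-- The approximate mode `x(λ) = λ + k - 3 + (k - 3)/(2λ)`. -/
noncomputable def xApprox (k : ℝ) : ℝ → ℝ :=
  fun lam => lam + k - 3 + (k - 3) / (2 * lam)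

/-- The residual obtained by substituting `xApprox k` into the mode ODE. -/
noncomputable def resR (k : ℝ) : ℝ → ℝ :=
  fun lam =>
    lam * deriv (xApprox k) lam * (xApprox k lam - k - lam + 4) +
      xApprox k lam * (xApprox k lam - k - lam + 2)

lemma xApprox_deriv (k lam : ℝ) (h : lam ≠ 0) :
    deriv (xApprox k) lam = 1 - (k - 3) / (2 * lam ^ 2) := by
  have h1 : HasDerivAt (xApprox k) (1 + (k - 3) / 2 * (-(lam ^ 2)⁻¹)) lam := by
    have : HasDerivAt (fun x : ℝ => x + k - 3 + (k - 3) / (2 * x))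
        (1 + (k - 3) / 2 * (-(lam ^ 2)⁻¹)) lam := by
      have hinv : HasDerivAt (fun x : ℝ => x⁻¹) (-(lam ^ 2)⁻¹) lam := hasDerivAt_inv h
      have := ((hasDerivAt_id lam).add_const k |>.sub_const 3).add
        ((hinv.const_mul ((k - 3) / 2)))
      have heq : ∀ x : ℝ, (k - 3) / (2 * x) = (k - 3) / 2 * x⁻¹ := fun x => by
        rw [div_eq_mul_inv, mul_inv]; ring
      simpa only [heq, id, Pi.add_def] using this
    exact this
  rw [h1.deriv]
  field_simp
  ring

lemma resR_eq (k lam : ℝ) (h : lam ≠ 0) :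
    resR k lam = (k - 3) * (k - 5) / (2 * lam) := by
  simp only [resR, xApprox, xApprox_deriv k lam h]
  field_simp
  ring

theorem stmt_6 (k : ℝ) (hk : 0 < k) :
    (∃ C : ℝ, ∀ᶠ lam in Filter.atTop, |lam * resR k lam| ≤ C) ∧
      Filter.Tendsto (resR k) Filter.atTop (nhds 0) := by
  have hev : ∀ᶠ lam : ℝ in Filter.atTop, lam ≠ 0 :=
    Filter.eventually_atTop.2 ⟨1, fun x hx => by linarith⟩
  constructor
  · refine ⟨|(k - 3) * (k - 5) / 2|, ?_⟩
    filter_upwards [hev] with lam h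
    rw [resR_eq k lam h]
    have : lam * ((k - 3) * (k - 5) / (2 * lam)) = (k - 3) * (k - 5) / 2 := by
      field_simp
    rw [this]
  · have : Filter.Tendsto (fun lam : ℝ => (k - 3) * (k - 5) / 2 * lam⁻¹)
        Filter.atTop (nhds 0) := by
      have := tendsto_inv_atTop_zero (𝕜 := ℝ)
      simpa using this.const_mul ((k - 3) * (k - 5) / 2)
    refine this.congr' ?_
    filter_upwards [hev] with lam h
    rw [resR_eq k lam h]
    field_simp
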